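/- Let G be a graph and H a hypergraph with V(H) = V(G), and suppose G is d-degenerate. Then (G,H) has a proper conflict-free coloring using at most d + Δ(H) + 1 colors, where Δ(H) is the maximum, over vertices v, of the number of edges of H containing v. -/

import Mathlib

theorem stmt_10 {V : Type*} [Fintype V] [DecidableEq V]
    (G : SimpleGraph V) [DecidableRel G.Adj]
    (E : Finset (Finset V)) (hE : ∀ e ∈ E, e.Nonempty)
    (d : ℕ)
    (hdeg : ∀ s : Finset V, s.Nonempty →
      ∃ v ∈ s, (s.filter fun w => G.Adj v w).card ≤ d)
    (ΔH : ℕ) (hΔH : ΔH = Finset.univ.sup fun v : V => (E.filter fun z => v ∈ z).card) :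
    ∃ φ : V → Fin (d + ΔH + 1),
      (∀ u v : V, G.Adj u v → φ u ≠ φ v) ∧
      (∀ e ∈ E, ∃ c : Fin (d + ΔH + 1), (e.filter fun v => φ v = c).card = 1) := by
  classical
  rcases isEmpty_or_nonempty V with h | hV
  · refine ⟨fun v => isEmptyElim v, fun u v huv => isEmptyElim u, fun e he => ?_⟩
    obtain ⟨v, _⟩ := hE e he
    exact isEmptyElim v
  -- Step 1: a degeneracy ordering
  have horder : ∀ s : Finset V, ∃ L : List V, L.toFinset = s ∧ L.Nodup ∧
      ∀ i (hi : i < L.length),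
        (((L.take i).toFinset).filter fun w => G.Adj (L[i]'hi) w).card ≤ d := by
    intro s
    induction s using Finset.strongInduction with
    | _ s ih =>
      rcases s.eq_empty_or_nonempty with rfl | hs
      · exact ⟨[], by simp, by simp, by simp⟩
      · obtain ⟨v, hv, hvd⟩ := hdeg s hs
        obtain ⟨L', hL't, hL'n, hL'p⟩ := ih (s.erase v) (Finset.erase_ssubset hv)
        have hvL' : v ∉ L' := by rw [← List.mem_toFinset, hL't]; simp
        refine ⟨L' ++ [v], ?_, ?_, ?_⟩
        · rw [List.toFinset_append, hL't]
          simp only [List.toFinset_cons, List.toFinset_nil, insert_empty_eq]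
          rw [Finset.union_comm, ← Finset.insert_eq, Finset.insert_erase hv]
        · simp [List.nodup_append, hL'n, hvL']; exact fun a ha h => hvL' (h ▸ ha)
        · intro i hi
          have hi' : i < L'.length + 1 := by simpa using hi
          rcases lt_or_eq_of_le (Nat.lt_succ_iff.mp hi') with h | h
          · have e1 : (L' ++ [v])[i]'hi = L'[i]'h := List.getElem_append_left h
            have e2 : (L' ++ [v]).take i = L'.take i := by
              simp [List.take_append]; omega
            rw [e1, e2]
            exact hL'p i h
          · subst h
            have e1 : (L' ++ [v])[L'.length]'hi = v := by simp
            have e2 : (L' ++ [v]).take L'.length = L' := List.take_left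
            rw [e1, e2, hL't]
            exact le_trans (Finset.card_le_card
              (Finset.filter_subset_filter _ (Finset.erase_subset v s))) hvd
  obtain ⟨L, hLt, hLn, hLp⟩ := horder Finset.univ
  have hmemL : ∀ v : V, v ∈ L := fun v => by
    rw [← List.mem_toFinset, hLt]; exact Finset.mem_univ v
  have hlen : ∀ v : V, L.idxOf v < L.length := fun v =>
    List.idxOf_lt_length_iff.2 (hmemL v)
  have hidx_mem : ∀ (w : V) (n : ℕ), L.idxOf w < n → w ∈ L.take n := by
    intro w n hwn
    have h1 : L.idxOf w < (L.take n).length := by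
      rw [List.length_take]; exact lt_min hwn (hlen w)
    have h2 : (L.take n)[L.idxOf w]'h1 = w := by
      rw [List.getElem_take]; exact List.getElem_idxOf (hlen w)
    exact h2 ▸ List.getElem_mem h1
  have hmem_take : ∀ (w : V) (n : ℕ), w ∈ L.take n → L.idxOf w < n := by
    intro w n hw
    obtain ⟨i, hi, hget⟩ := List.mem_iff_getElem.1 hw
    have hi2 : i < n ∧ i < L.length := by
      rw [List.length_take, lt_min_iff] at hi; exact hi
    have hLi : L[i]'hi2.2 = w := by rw [← hget, List.getElem_take]
    have := List.Nodup.idxOf_getElem hLn i hi2.2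
    rw [hLi] at this
    omega
  -- the "first vertex" function of each edge
  have hfex : ∀ e : Finset V, ∃ w : V, e.Nonempty →
      w ∈ e ∧ ∀ w' ∈ e, L.idxOf w ≤ L.idxOf w' := by
    intro e
    rcases e.eq_empty_or_nonempty with rfl | he
    · exact ⟨Classical.choice hV, by simp⟩
    · obtain ⟨w, hw1, hw2⟩ := e.exists_min_image (fun v => L.idxOf v) he
      exact ⟨w, fun _ => ⟨hw1, hw2⟩⟩
  choose f hf using hfex
  -- Step 2: greedy coloring along prefixes of L
  have main : ∀ n : ℕ, ∃ φ : V → Fin (d + ΔH + 1),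
      (∀ u v : V, u ∈ L.take n → v ∈ L.take n → G.Adj u v → φ u ≠ φ v) ∧
      (∀ e ∈ E, ∀ v : V, v ∈ L.take n → v ∈ e → v ≠ f e → φ v ≠ φ (f e)) := by
    intro n
    induction n with
    | zero => exact ⟨fun _ => 0, by simp, by simp⟩
    | succ n ih =>
      obtain ⟨φ, hp, hc⟩ := ih
      by_cases hn : n < L.length
      · have hvdef : ∃ v : V, L[n]'hn = v := ⟨L[n]'hn, rfl⟩
        obtain ⟨v, hv⟩ := hvdef
        have htake : L.take (n + 1) = L.take n ++ [v] := by
          rw [List.take_succ]; simp [List.getElem?_eq_getElem hn, hv]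
        have hidxv : L.idxOf v = n := by
          rw [← hv]; exact List.Nodup.idxOf_getElem hLn n hn
        have hvnot : v ∉ L.take n := fun h => by
          have := hmem_take v n h; omega
        set S : Finset (Fin (d + ΔH + 1)) :=
          (((L.take n).toFinset.filter fun w => G.Adj v w).image φ) ∪
          ((E.filter fun e => v ∈ e).image fun e => φ (f e)) with hS
        have hScard : S.card ≤ d + ΔH := by
          refine le_trans (Finset.card_union_le _ _) (Nat.add_le_add ?_ ?_)
          · refine le_trans Finset.card_image_le ?_
            have := hLp n hn
            rw [hv] at this
            exact this
          · refine le_trans Finset.card_image_le ?_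
            rw [hΔH]
            exact Finset.le_sup (f := fun v : V => (E.filter fun z => v ∈ z).card)
              (Finset.mem_univ v)
        have hex : ∃ c : Fin (d + ΔH + 1), c ∉ S := by
          by_contra hcon
          push_neg at hcon
          have h1 : (Finset.univ : Finset (Fin (d + ΔH + 1))).card ≤ S.card :=
            Finset.card_le_card fun c _ => hcon c
          rw [Finset.card_univ, Fintype.card_fin] at h1
          omega
        obtain ⟨c, hcS⟩ := hex
        refine ⟨Function.update φ v c, ?_, ?_⟩
        · intro u w hu hw hadj
          rw [htake, List.mem_append, List.mem_singleton] at hu hw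
          rcases hu with hu | hu <;> rcases hw with hw | hw
          · rw [Function.update_of_ne (ne_of_mem_of_not_mem hu hvnot),
                Function.update_of_ne (ne_of_mem_of_not_mem hw hvnot)]
            exact hp u w hu hw hadj
          · subst hw
            rw [Function.update_of_ne (ne_of_mem_of_not_mem hu hvnot),
                Function.update_self]
            intro heq
            apply hcS
            apply Finset.mem_union_left
            exact Finset.mem_image.2 ⟨u,
              Finset.mem_filter.2 ⟨List.mem_toFinset.2 hu, hadj.symm⟩, heq⟩
          · subst hu
            rw [Function.update_of_ne (ne_of_mem_of_not_mem hw hvnot),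
                Function.update_self]
            intro heq
            apply hcS
            apply Finset.mem_union_left
            exact Finset.mem_image.2 ⟨w,
              Finset.mem_filter.2 ⟨List.mem_toFinset.2 hw, hadj⟩, heq.symm⟩
          · subst hu; subst hw
            exact absurd hadj (G.loopless.irrefl _)
        · intro e he w hw hwe hwf
          rw [htake, List.mem_append, List.mem_singleton] at hw
          rcases hw with hw | hw
          · have hwv : w ≠ v := ne_of_mem_of_not_mem hw hvnot
            have hfv : f e ≠ v := by
              intro h
              have h1 : L.idxOf (f e) ≤ L.idxOf w := (hf e (hE e he)).2 w hwe
              have h2 : L.idxOf w < n := hmem_take w n hw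
              rw [h, hidxv] at h1
              omega
            rw [Function.update_of_ne hwv, Function.update_of_ne hfv]
            exact hc e he w hw hwe hwf
          · subst hw
            have hfv : f e ≠ w := fun h => hwf h.symm
            rw [Function.update_self, Function.update_of_ne hfv]
            intro heq
            apply hcS
            apply Finset.mem_union_right
            exact Finset.mem_image.2 ⟨e, Finset.mem_filter.2 ⟨he, hwe⟩, heq.symm⟩
      · have heq : L.take (n + 1) = L.take n := by
          rw [List.take_of_length_le (by omega), List.take_of_length_le (by omega)]
        rw [heq]
        exact ⟨φ, hp, hc⟩
  obtain ⟨φ, hp, hc⟩ := main L.length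
  rw [List.take_length] at hp hc
  refine ⟨φ, fun u w hadj => hp u w (hmemL u) (hmemL w) hadj, ?_⟩
  intro e he
  refine ⟨φ (f e), ?_⟩
  rw [Finset.card_eq_one]
  refine ⟨f e, ?_⟩
  ext w
  simp only [Finset.mem_filter, Finset.mem_singleton]
  constructor
  · rintro ⟨hw1, hw2⟩
    by_contra hne
    exact hc e he w (hmemL w) hw1 hne hw2
  · rintro rfl
    exact ⟨(hf e (hE e he)).1, rfl⟩
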